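/- arXiv:2509.16102 — 4 statements merged into one kernel-verified Lean document; each statement's English description precedes it below -/
import Mathlib

section
/- Let p be an odd prime, n ∈ ℕ, α ∈ (F_p)^n, I a finite index set, and for each i ∈ I a subset I_i ⊆ {1,...,n} with Σ_{j ∈ I_i} α_j = 0 in F_p. Suppose there exists r ∈ F_p^* such that for every coordinate j, |r·α_j|_p ≤ min over {i ∈ I : j ∈ I_i} of ⌊(p-1)/|I_i|⌋. Then for every i ∈ I, the lifted integers satisfy Σ_{j ∈ I_i} L(r·α_j) = 0 in ℤ. -/
/-- The centered lift of an element of `ZMod p` to `ℤ`. -/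
def centeredLift (p : ℕ) (x : ZMod p) : ℤ :=
  if x.val ≤ (p - 1) / 2 then (x.val : ℤ) else (x.val : ℤ) - p

lemma abs_centeredLift_le (p : ℕ) [NeZero p] (x : ZMod p) :
    |centeredLift p x| ≤ ((min x.val (p - x.val) : ℕ) : ℤ) := by
  have hv : x.val < p := ZMod.val_lt x
  unfold centeredLift
  split_ifs with h
  · rw [abs_of_nonneg (by positivity)]
    push_cast; omega
  · rw [abs_of_nonpos (by push_cast; omega)]
    push_cast; omega

lemma centeredLift_cast (p : ℕ) [NeZero p] (x : ZMod p) :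
    ((centeredLift p x : ℤ) : ZMod p) = x := by
  unfold centeredLift
  split_ifs with h <;> push_cast <;> simp [ZMod.natCast_val, ZMod.intCast_cast]

theorem lifting_general (p : ℕ) (hp : p.Prime) (hodd : Odd p) (n : ℕ)
    (α : Fin n → ZMod p) (ι : Type) [Fintype ι] (I : ι → Finset (Fin n))
    (hsum : ∀ i, ∑ j ∈ I i, α j = 0)
    (r : ZMod p) (hr : r ≠ 0)
    (hbound : ∀ (i : ι) (j : Fin n), j ∈ I i →
      min ((r * α j).val) (p - (r * α j).val) ≤ (p - 1) / (I i).card) :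
    ∀ i, ∑ j ∈ I i, centeredLift p (r * α j) = 0 := by
  haveI : NeZero p := ⟨hp.pos.ne'⟩
  intro i
  set S : ℤ := ∑ j ∈ I i, centeredLift p (r * α j) with hS
  have hdvd : (p : ℤ) ∣ S := by
    rw [← ZMod.intCast_zmod_eq_zero_iff_dvd]
    push_cast [hS]
    calc (∑ j ∈ I i, ((centeredLift p (r * α j) : ℤ) : ZMod p))
        = ∑ j ∈ I i, (r * α j) := by
          refine Finset.sum_congr rfl fun j _ => centeredLift_cast p _
      _ = r * ∑ j ∈ I i, α j := by rw [Finset.mul_sum]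
      _ = 0 := by rw [hsum i, mul_zero]
  have habs : |S| ≤ ((p : ℤ) - 1) := by
    calc |S| ≤ ∑ j ∈ I i, |centeredLift p (r * α j)| := Finset.abs_sum_le_sum_abs _ _
      _ ≤ ∑ j ∈ I i, (((p - 1) / (I i).card : ℕ) : ℤ) := by
          refine Finset.sum_le_sum fun j hj => ?_
          refine (abs_centeredLift_le p _).trans ?_
          exact_mod_cast hbound i j hj
      _ = (((I i).card * ((p - 1) / (I i).card) : ℕ) : ℤ) := by
          rw [Finset.sum_const, nsmul_eq_mul]; push_cast; ring
      _ ≤ ((p : ℤ) - 1) := by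
          have h2 : (I i).card * ((p - 1) / (I i).card) ≤ p - 1 := by
            rw [mul_comm]; exact Nat.div_mul_le_self _ _
          have hp1 : 1 ≤ p := hp.pos
          have := (Nat.cast_le (α := ℤ)).mpr h2
          omega
  have : |S| < (p : ℤ) := by omega
  exact Int.eq_zero_of_abs_lt_dvd hdvd this
end

section
/- Let n, k ∈ ℕ with k ≥ 1. Then there exists a prime p > k such that for every vector α ∈ (F_p)^n there exists r ∈ F_p with r ≠ 0 such that for all i, |r·α_i|_p ≤ ⌊(p-1)/k⌋. -/
lemma key_div_bound (p k a b : ℕ) (hp : 0 < p) (hk : 0 < k) (hab : b ≤ a)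
    (h : a * k / p = b * k / p) : a - b ≤ (p - 1) / k := by
  have h1 : a * k < b * k + p := by
    have d1 := Nat.div_add_mod (a * k) p
    have m1 := Nat.mod_lt (a * k) hp
    have d2 := Nat.div_mul_le_self (b * k) p
    rw [h] at d1
    nlinarith [d1, m1, d2]
  have h2 : (a - b) * k ≤ p - 1 := by
    have : (a - b) * k = a * k - b * k := by rw [Nat.sub_mul]
    omega
  exact (Nat.le_div_iff_mul_le hk).mpr h2

theorem exists_prime_always_liftable (n k : ℕ) (hk : 1 ≤ k) :
    ∃ p : ℕ, p.Prime ∧ k < p ∧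
      ∀ α : Fin n → ZMod p, ∃ r : ZMod p, r ≠ 0 ∧
        ∀ i, min ((r * α i).val) (p - (r * α i).val) ≤ (p - 1) / k := by
  obtain ⟨p, hpN, hp⟩ := Nat.exists_infinite_primes (max k (k ^ n) + 1)
  have hkp : k < p := lt_of_lt_of_le (lt_of_le_of_lt (le_max_left _ _) (Nat.lt_succ_self _)) hpN
  have hknp : k ^ n < p := lt_of_lt_of_le (lt_of_le_of_lt (le_max_right _ _) (Nat.lt_succ_self _)) hpN
  have hp0 : 0 < p := hp.pos
  haveI : Fact p.Prime := ⟨hp⟩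
  refine ⟨p, hp, hkp, fun α => ?_⟩
  -- pigeonhole
  have hk0 : 0 < k := hk
  have hcard : Fintype.card (Fin n → Fin k) < Fintype.card (ZMod p) := by
    simp [ZMod.card, hknp]
  obtain ⟨t, t', htt', hft⟩ := Fintype.exists_ne_map_eq_of_card_lt
    (fun t : ZMod p => fun i : Fin n => (⟨(t * α i).val * k / p, by
      have : (t * α i).val < p := ZMod.val_lt _
      exact Nat.div_lt_of_lt_mul (by nlinarith)⟩ : Fin k)) hcard
  refine ⟨t - t', sub_ne_zero.mpr htt', fun i => ?_⟩
  have hfi : (t * α i).val * k / p = (t' * α i).val * k / p := by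
    have := congrFun hft i
    simpa using congrArg Fin.val this
  have hmul : (t - t') * α i = t * α i - t' * α i := by ring
  rw [hmul]
  set x := t * α i
  set y := t' * α i
  rcases le_or_gt y.val x.val with hle | hlt
  · have hv : (x - y).val = x.val - y.val := ZMod.val_sub hle
    have := key_div_bound p k x.val y.val hp0 hk0 hle hfi
    omega
  · have hne : y - x ≠ 0 := by
      intro h0
      have hyx : y = x := by rwa [sub_eq_zero] at h0
      rw [hyx] at hlt
      exact lt_irrefl _ hlt
    have hvyx : (y - x).val = y.val - x.val := ZMod.val_sub hlt.le
    have hxy : x - y = -(y - x) := by ring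
    have hv : (x - y).val = p - (y - x).val := by
      rw [hxy, ZMod.neg_val, if_neg hne]
    have hvlt : (y - x).val < p := ZMod.val_lt _
    have := key_div_bound p k y.val x.val hp0 hk0 hlt.le hfi.symm
    omega
end

section
/- Let n, k ∈ ℕ with k ≥ 1 and let p be a prime with p - 1 > k^n. Then for every vector α ∈ (F_p)^n there exist r_1, r_2 ∈ F_p^* with r_1 ≠ r_2 such that, setting r = r_1 - r_2, every coordinate satisfies |r·α_i|_p ≤ ⌊(p-1)/k⌋. -/
lemma div_eq_imp_close (p x y : ℕ) (hp : 0 < p) (h : x / p = y / p) : x < y + p := by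
  have h1 := Nat.div_add_mod x p
  have h2 := Nat.div_add_mod y p
  have h3 := Nat.mod_lt x hp
  rw [h] at h1
  omega

lemma sub_val_min_le (p k : ℕ) (hp : 1 < p) (hk : 1 ≤ k) (a b : ZMod p)
    [NeZero p]
    (h1 : (a.val - b.val) * k < p) (h2 : (b.val - a.val) * k < p) :
    min ((a - b).val) (p - (a - b).val) ≤ (p - 1) / k := by
  have ha : a.val < p := ZMod.val_lt a
  have hb : b.val < p := ZMod.val_lt b
  rcases le_or_gt b.val a.val with hle | hlt
  · -- a - b has val a.val - b.val
    have hz : (a - b) = ((a.val - b.val : ℕ) : ZMod p) := by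
      push_cast [Nat.cast_sub hle]
      simp [ZMod.natCast_val, ZMod.cast_id]
    have hval : (a - b).val = a.val - b.val := by
      rw [hz, ZMod.val_natCast, Nat.mod_eq_of_lt (by omega)]
    calc min ((a - b).val) (p - (a - b).val) ≤ (a - b).val := min_le_left _ _
      _ = a.val - b.val := hval
      _ ≤ (p - 1) / k := by
          rw [Nat.le_div_iff_mul_le hk]
          omega
  · -- b.val > a.val : (a-b) = -(b-a)
    have hz : (a - b) = -(((b.val - a.val : ℕ) : ZMod p)) := by
      push_cast [Nat.cast_sub hlt.le]
      simp [ZMod.natCast_val, ZMod.cast_id]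
    have hne : ((b.val - a.val : ℕ) : ZMod p) ≠ 0 := by
      rw [Ne, ZMod.natCast_eq_zero_iff]
      intro hdvd
      have := Nat.le_of_dvd (by omega) hdvd
      omega
    have hval2 : ((b.val - a.val : ℕ) : ZMod p).val = b.val - a.val := by
      rw [ZMod.val_natCast, Nat.mod_eq_of_lt (by omega)]
    haveI : NeZero ((b.val - a.val : ℕ) : ZMod p) := ⟨hne⟩
    have hval : (a - b).val = p - (b.val - a.val) := by
      rw [hz, ZMod.val_neg_of_ne_zero, hval2]
    have : p - (a - b).val = b.val - a.val := by omega
    calc min ((a - b).val) (p - (a - b).val) ≤ p - (a - b).val := min_le_right _ _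
      _ = b.val - a.val := this
      _ ≤ (p - 1) / k := by
          rw [Nat.le_div_iff_mul_le hk]
          omega

theorem pigeonhole_scaling (n k : ℕ) (hk : 1 ≤ k) (p : ℕ) (hp : p.Prime)
    (hpk : k ^ n < p - 1) (α : Fin n → ZMod p) :
    ∃ r₁ r₂ : ZMod p, r₁ ≠ 0 ∧ r₂ ≠ 0 ∧ r₁ ≠ r₂ ∧
      ∀ i, min (((r₁ - r₂) * α i).val) (p - ((r₁ - r₂) * α i).val) ≤ (p - 1) / k := by
  haveI : Fact p.Prime := ⟨hp⟩
  have hp1 : 1 < p := hp.one_lt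
  have hfin : ∀ (u : (ZMod p)ˣ) (i : Fin n),
      ((u : ZMod p) * α i).val * k / p < k := by
    intro u i
    apply Nat.div_lt_of_lt_mul
    have := ZMod.val_lt ((u : ZMod p) * α i)
    calc ((u : ZMod p) * α i).val * k < p * k :=
          (Nat.mul_lt_mul_right (by omega : 0 < k)).mpr this
      _ = p * k := rfl
  set f : (ZMod p)ˣ → (Fin n → Fin k) :=
    fun u i => ⟨((u : ZMod p) * α i).val * k / p, hfin u i⟩ with hf
  have hcard : Fintype.card (Fin n → Fin k) < Fintype.card (ZMod p)ˣ := by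
    rw [ZMod.card_units_eq_totient, Nat.totient_prime hp]
    simpa using hpk
  obtain ⟨u₁, u₂, hne, hfe⟩ := Fintype.exists_ne_map_eq_of_card_lt f hcard
  refine ⟨u₁, u₂, u₁.ne_zero, u₂.ne_zero, fun h => hne (Units.ext h), fun i => ?_⟩
  have hfe' : ((u₁ : ZMod p) * α i).val * k / p = ((u₂ : ZMod p) * α i).val * k / p := by
    have := congrFun hfe i
    simpa [hf] using congrArg Fin.val this
  set v := ((u₁ : ZMod p) * α i).val with hv
  set w := ((u₂ : ZMod p) * α i).val with hw
  -- from equal floors: |v*k - w*k| < p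
  have key1 : v * k < w * k + p := div_eq_imp_close p _ _ (by omega) hfe'
  have key2 : w * k < v * k + p := div_eq_imp_close p _ _ (by omega) hfe'.symm
  have hmul : ((u₁ : ZMod p) - (u₂ : ZMod p)) * α i
      = (u₁ : ZMod p) * α i - (u₂ : ZMod p) * α i := by ring
  rw [hmul]
  exact sub_val_min_le p k hp1 hk _ _
    (by rw [tsub_mul, ← hv, ← hw]; omega)
    (by rw [tsub_mul, ← hv, ← hw]; omega)
end

section
/- Let p be an odd prime, n ∈ ℕ, and α ∈ (F_p)^n. Suppose τ ranges over a finite index set T and for each τ there is a subset I_τ ⊆ {1,...,n} and signs ε_{τ,j} ∈ {±1} for j ∈ I_τ with Σ_{j ∈ I_τ} ε_{τ,j}·α_j = 0 in F_p. If there exists r ∈ F_p^* such that for every τ and every j ∈ I_τ, |r·α_j|_p ≤ ⌊(p-1)/|I_τ|⌋, then the lifted integer vector L(r·α) satisfies Σ_{j ∈ I_τ} ε_{τ,j}·L(r·α_j) = 0 in ℤ for all τ. -/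
lemma abs_centeredLift (p : ℕ) [NeZero p] (x : ZMod p) :
    |centeredLift p x| = ((min x.val (p - x.val) : ℕ) : ℤ) := by
  have hv : x.val < p := ZMod.val_lt x
  unfold centeredLift
  split <;> rw [abs_eq (by positivity)] <;> push_cast [Nat.cast_min, Nat.cast_sub hv.le] <;> omega

theorem signed_lifting (p : ℕ) (hp : p.Prime) (hodd : Odd p) (n : ℕ)
    (α : Fin n → ZMod p) (T : Type) [Fintype T]
    (I : T → Finset (Fin n)) (ε : T → Fin n → ℤ)
    (hε : ∀ τ, ∀ j ∈ I τ, ε τ j = 1 ∨ ε τ j = -1)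
    (hsum : ∀ τ, ∑ j ∈ I τ, (ε τ j : ZMod p) * α j = 0)
    (r : ZMod p) (hr : r ≠ 0)
    (hbound : ∀ τ, ∀ j ∈ I τ,
      min ((r * α j).val) (p - (r * α j).val) ≤ (p - 1) / (I τ).card) :
    ∀ τ, ∑ j ∈ I τ, ε τ j * centeredLift p (r * α j) = 0 := by
  haveI : NeZero p := ⟨hp.ne_zero⟩
  have hp2 : 2 ≤ p := hp.two_le
  intro τ
  set S := ∑ j ∈ I τ, ε τ j * centeredLift p (r * α j) with hS
  have hdvd : (p : ℤ) ∣ S := by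
    rw [← ZMod.intCast_zmod_eq_zero_iff_dvd]
    rw [hS]
    push_cast
    simp only [centeredLift_cast]
    calc ∑ j ∈ I τ, (ε τ j : ZMod p) * (r * α j)
        = r * ∑ j ∈ I τ, (ε τ j : ZMod p) * α j := by
          rw [Finset.mul_sum]; apply Finset.sum_congr rfl; intro j _; ring
      _ = 0 := by rw [hsum τ, mul_zero]
  have habs : |S| ≤ (p : ℤ) - 1 := by
    calc |S| ≤ ∑ j ∈ I τ, |ε τ j * centeredLift p (r * α j)| :=
          Finset.abs_sum_le_sum_abs _ _
      _ ≤ ∑ _j ∈ I τ, (((p - 1) / (I τ).card : ℕ) : ℤ) := by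
          apply Finset.sum_le_sum
          intro j hj
          rw [abs_mul]
          have h1 : |ε τ j| = 1 := by rcases hε τ j hj with h | h <;> simp [h]
          rw [h1, one_mul, abs_centeredLift]
          exact_mod_cast hbound τ j hj
      _ = ((I τ).card : ℤ) * (((p - 1) / (I τ).card : ℕ) : ℤ) := by
          rw [Finset.sum_const, nsmul_eq_mul]
      _ ≤ (((p - 1) : ℕ) : ℤ) := by
          have h : (I τ).card * ((p - 1) / (I τ).card) ≤ p - 1 := by
            rw [mul_comm]; exact Nat.div_mul_le_self _ _
          exact_mod_cast h
      _ ≤ (p : ℤ) - 1 := by omega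
  have : |S| < (p : ℤ) := by omega
  exact Int.eq_zero_of_abs_lt_dvd hdvd this
end
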